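/- Godunov–Ryabenkii condition for the 1D leap-frog DTBC: let μ_x ∈ (0,1) and let z ∈ ℂ with |z| > 1. If (v_j)_{j≥0} ∈ ℓ²(ℕ) satisfies (z² - 1) v_j + μ_x z (v_{j+1} - v_{j-1}) = 0 for all j ≥ 1 and the boundary relation v_0 = -κ_s⁰(z) v_1, then v_j = 0 for all j. -/
import Mathlib


/-- Godunov–Ryabenkii condition for the 1D leap-frog DTBC: for `μ ∈ (0,1)` and
`|z| > 1`, any `ℓ²` solution of `(z²-1) v_j + μ z (v_{j+1} - v_{j-1}) = 0` (`j ≥ 1`)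
satisfying the boundary relation `v_0 = -κ_s⁰(z) v_1` vanishes identically. -/
theorem godunov_ryabenkii_1d (μ : ℝ) (hμ0 : 0 < μ) (hμ1 : μ < 1)
    (z : ℂ) (hz : 1 < ‖z‖)
    (κs : ℂ) (hκs_root : κs ^ 2 + ((z - z⁻¹) / (μ : ℂ)) * κs - 1 = 0)
    (hκs_stable : ‖κs‖ < 1)
    (v : ℕ → ℂ) (hv : Memℓp v 2)
    (hscheme : ∀ j : ℕ, 1 ≤ j →
      (z ^ 2 - 1) * v j + (μ : ℂ) * z * (v (j + 1) - v (j - 1)) = 0)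
    (hbc : v 0 = -κs * v 1) :
    ∀ j : ℕ, v j = 0 := by
  have hz0 : z ≠ 0 := by
    intro h; rw [h, norm_zero] at hz; linarith
  have hμc : (μ : ℂ) ≠ 0 := by
    exact_mod_cast (ne_of_gt hμ0 : μ ≠ 0) ∘ Complex.ofReal_eq_zero.mp
  have hκ0 : κs ≠ 0 := by
    intro h; rw [h] at hκs_root; norm_num at hκs_root
  -- v tends to 0
  have hvt : Filter.Tendsto v Filter.atTop (nhds 0) := by
    have hs : Summable fun i => ‖v i‖ ^ (2 : ℝ) := by
      have := hv.summable (p := 2) (by norm_num)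
      simpa using this
    have h0 : Filter.Tendsto (fun i => ‖v i‖ ^ (2 : ℝ)) Filter.atTop (nhds 0) :=
      hs.tendsto_atTop_zero
    rw [tendsto_zero_iff_norm_tendsto_zero]
    have h1 : Filter.Tendsto (fun i => Real.sqrt (‖v i‖ ^ (2 : ℝ))) Filter.atTop (nhds 0) := by
      have h2 := (Real.continuous_sqrt.tendsto 0).comp h0
      rw [Real.sqrt_zero] at h2
      exact h2.congr fun i => rfl
    refine h1.congr fun i => ?_
    rw [show ((2:ℝ)) = ((2:ℕ):ℝ) by norm_num, Real.rpow_natCast,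
      Real.sqrt_sq (norm_nonneg _)]
  -- recurrence
  set c : ℂ := (z - z⁻¹) / μ with hcdef
  have hrec : ∀ j : ℕ, 1 ≤ j → v (j + 1) = v (j - 1) - c * v j := by
    intro j hj
    have h := hscheme j hj
    have hzi : z * z⁻¹ = 1 := mul_inv_cancel₀ hz0
    have hμi : (μ : ℂ) * (μ : ℂ)⁻¹ = 1 := mul_inv_cancel₀ hμc
    have hkey : (μ : ℂ) * z * v (j + 1) = (μ : ℂ) * z * (v (j - 1) - c * v j) := by
      rw [hcdef, div_eq_mul_inv]
      linear_combination h + z * (z - z⁻¹) * v j * hμi - v j * hzi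
    exact mul_left_cancel₀ (mul_ne_zero hμc hz0) hkey
  have hκi : κs * κs⁻¹ = 1 := mul_inv_cancel₀ hκ0
  have hsum : c = κs⁻¹ - κs := by
    linear_combination κs⁻¹ * hκs_root + (-κs - c) * hκi
  set κu : ℂ := -κs⁻¹ with hκudef
  have hκu1 : 1 < ‖κu‖ := by
    rw [hκudef, norm_neg, norm_inv]
    rw [lt_inv_comm₀ (by norm_num) (norm_pos_iff.mpr hκ0)]
    simpa using hκs_stable
  set w : ℕ → ℂ := fun j => v (j + 1) - κs * v j with hwdef
  have hw : ∀ j : ℕ, w (j + 1) = κu * w j := by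
    intro j
    have h := hrec (j + 1) (by omega)
    simp only [Nat.add_sub_cancel] at h
    simp only [hwdef, hκudef]
    linear_combination h + (-v (j + 1)) * hsum + (-v j) * hκi
  have hwpow : ∀ j : ℕ, w j = κu ^ j * w 0 := by
    intro j
    induction j with
    | zero => simp
    | succ n ih => rw [hw n, ih, pow_succ]; ring
  have hwt : Filter.Tendsto w Filter.atTop (nhds 0) := by
    have h1 : Filter.Tendsto (fun j => v (j + 1)) Filter.atTop (nhds 0) :=
      hvt.comp (Filter.tendsto_add_atTop_nat 1)
    simpa using h1.sub (hvt.const_mul κs)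
  have hw0 : w 0 = 0 := by
    by_contra hne
    have hb : ∀ j : ℕ, ‖w 0‖ ≤ ‖w j‖ := by
      intro j
      rw [hwpow j, norm_mul, norm_pow]
      calc ‖w 0‖ = 1 * ‖w 0‖ := by ring
        _ ≤ ‖κu‖ ^ j * ‖w 0‖ := by
            apply mul_le_mul_of_nonneg_right _ (norm_nonneg _)
            exact one_le_pow₀ (le_of_lt hκu1)
    have := hwt.norm
    rw [norm_zero] at this
    have h2 := this.eventually_lt_const (norm_pos_iff.mpr hne)
    obtain ⟨j, hj⟩ := h2.exists
    exact absurd (hb j) (not_le.mpr hj)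
  have hstep : ∀ j : ℕ, v (j + 1) = κs * v j := by
    intro j
    have := hwpow j
    rw [hw0, mul_zero] at this
    exact sub_eq_zero.mp this
  have h1κ : (1 : ℂ) + κs ^ 2 ≠ 0 := by
    intro h
    have : κs ^ 2 = -1 := by linear_combination h
    have : ‖κs ^ 2‖ = 1 := by rw [this]; simp
    rw [norm_pow] at this
    nlinarith [norm_nonneg κs]
  have hv0 : v 0 = 0 := by
    have h := hbc
    rw [hstep 0] at h
    have : (1 + κs ^ 2) * v 0 = 0 := by linear_combination h
    exact (mul_eq_zero.mp this).resolve_left h1κ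
  intro j
  induction j with
  | zero => exact hv0
  | succ n ih => rw [hstep n, ih, mul_zero]
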